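/- Let a > b > 0, A = (a+b)/2, B = (a−b)/2. Let u : ℝ² → ℝ be twice continuously differentiable and define f(r,θ) = u((A·r + B/r)·cos θ, (A·r − B/r)·sin θ). Then for every r > 0 and every θ ∈ ℝ: ∂²f/∂r²(r,θ) + (1/r)·∂f/∂r(r,θ) + (1/r²)·∂²f/∂θ²(r,θ) = [(A − B/r²)² + (a²−b²)·sin²θ/r²] · (∂²u/∂w² + ∂²u/∂z²)((A·r + B/r)·cos θ, (A·r − B/r)·sin θ). -/

import Mathlib

private lemma aux_plus (A B c r : ℝ) (hr : r ≠ 0) :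
    HasDerivAt (fun r' : ℝ => (A * r' + B / r') * c) ((A - B / r ^ 2) * c) r := by
  have h : HasDerivAt (fun r' : ℝ => (A * r' + B * r'⁻¹) * c)
      ((A * 1 + B * (-(r ^ 2)⁻¹)) * c) r :=
    (((hasDerivAt_id r).const_mul A).add ((hasDerivAt_inv hr).const_mul B)).mul_const c
  convert h using 1
  all_goals first | ring1 | (funext x; ring1) | (field_simp; ring)

private lemma aux_minus (A B c r : ℝ) (hr : r ≠ 0) :
    HasDerivAt (fun r' : ℝ => (A * r' - B / r') * c) ((A + B / r ^ 2) * c) r := by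
  have h := aux_plus A (-B) c r hr
  convert h using 1
  all_goals first | ring1 | (funext x; ring1) | (field_simp; ring)

private lemma aux_v1 (A B c r : ℝ) (hr : r ≠ 0) :
    HasDerivAt (fun r' : ℝ => (A - B / r' ^ 2) * c) ((2 * B / r ^ 3) * c) r := by
  have h : HasDerivAt (fun r' : ℝ => (A - B * (r' ^ 2)⁻¹) * c)
      ((-(B * (-(↑2 * r ^ (2 - 1)) / (r ^ 2) ^ 2))) * c) r :=
    ((((hasDerivAt_pow 2 r).inv (pow_ne_zero 2 hr)).const_mul B).const_sub A).mul_const c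
  convert h using 1
  all_goals first | ring1 | (funext x; ring1) | (field_simp; ring)

private lemma aux_v2 (A B c r : ℝ) (hr : r ≠ 0) :
    HasDerivAt (fun r' : ℝ => (A + B / r' ^ 2) * c) ((-(2 * B) / r ^ 3) * c) r := by
  have h := aux_v1 A (-B) c r hr
  convert h using 1
  all_goals first | ring1 | (funext x; ring1) | (field_simp; ring)

private lemma aux_cos (C r : ℝ) :
    HasDerivAt (fun θ' : ℝ => C * Real.cos θ') (-(C * Real.sin r)) r := by
  simpa [mul_comm] using (Real.hasDerivAt_cos r).const_mul C

private lemma aux_sin (C r : ℝ) :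
    HasDerivAt (fun θ' : ℝ => C * Real.sin θ') (C * Real.cos r) r :=
  (Real.hasDerivAt_sin r).const_mul C

set_option maxHeartbeats 1000000 in
/-- under the Ghizzetti map `(r,θ) ↦ ((Ar + B/r)cos θ, (Ar - B/r)sin θ)`
the polar-type operator corresponds to the Laplacian via the conformal factor
`(A - B/r²)² + (a²-b²)sin²θ / r²`. -/
theorem ghizzetti_laplacian_transform
    (a b : ℝ) (hb : 0 < b) (hab : b < a)
    (A B : ℝ) (hA : A = (a + b) / 2) (hB : B = (a - b) / 2)
    (u : ℝ × ℝ → ℝ) (hu : ContDiff ℝ 2 u)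
    (f : ℝ → ℝ → ℝ)
    (hf : ∀ r θ : ℝ, f r θ =
      u ((A * r + B / r) * Real.cos θ, (A * r - B / r) * Real.sin θ))
    (r θ : ℝ) (hr : 0 < r) :
    deriv (fun r' => deriv (fun r'' => f r'' θ) r') r
      + (1 / r) * deriv (fun r' => f r' θ) r
      + (1 / r ^ 2) * deriv (fun θ' => deriv (fun θ'' => f r θ'') θ') θ
    = ((A - B / r ^ 2) ^ 2 + (a ^ 2 - b ^ 2) * Real.sin θ ^ 2 / r ^ 2)
      * (deriv (fun w => deriv (fun w' =>
            u (w', (A * r - B / r) * Real.sin θ)) w) ((A * r + B / r) * Real.cos θ)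
        + deriv (fun z => deriv (fun z' =>
            u ((A * r + B / r) * Real.cos θ, z')) z) ((A * r - B / r) * Real.sin θ)) := by
  have hud : Differentiable ℝ u := hu.differentiable (by norm_num)
  have hF : ContDiff ℝ 1 (fderiv ℝ u) :=
    hu.fderiv_right (by norm_num : (1 : WithTop ℕ∞) + 1 ≤ 2)
  have hFd : Differentiable ℝ (fderiv ℝ u) := hF.differentiable (by norm_num)
  -- generic first-derivative-along-a-curve lemma
  have key1 : ∀ (γ : ℝ → ℝ × ℝ) (t : ℝ) (v : ℝ × ℝ), HasDerivAt γ v t →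
      HasDerivAt (fun s => u (γ s)) (fderiv ℝ u (γ t) v) t :=
    fun γ t v h => (hud (γ t)).hasFDerivAt.comp_hasDerivAt t h
  have key2 : ∀ (γ w : ℝ → ℝ × ℝ) (t : ℝ) (v v' : ℝ × ℝ),
      HasDerivAt γ v t → HasDerivAt w v' t →
      HasDerivAt (fun s => fderiv ℝ u (γ s) (w s))
        (fderiv ℝ (fderiv ℝ u) (γ t) v (w t) + fderiv ℝ u (γ t) v') t :=
    fun γ w t v v' h hw =>
      (((hFd (γ t)).hasFDerivAt.comp_hasDerivAt t h).clm_apply hw)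
  simp only [hf]
  set P : ℝ × ℝ := ((A * r + B / r) * Real.cos θ, (A * r - B / r) * Real.sin θ) with hP
  -- curves
  set γr : ℝ → ℝ × ℝ := fun r' =>
    ((A * r' + B / r') * Real.cos θ, (A * r' - B / r') * Real.sin θ) with hγr
  set vr : ℝ → ℝ × ℝ := fun r' =>
    ((A - B / r' ^ 2) * Real.cos θ, (A + B / r' ^ 2) * Real.sin θ) with hvr
  have hγrd : ∀ r' : ℝ, r' ≠ 0 → HasDerivAt γr (vr r') r' := fun r' h =>
    (aux_plus A B (Real.cos θ) r' h).prodMk (aux_minus A B (Real.sin θ) r' h)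
  have hvrd : HasDerivAt vr
      ((2 * B / r ^ 3) * Real.cos θ, (-(2 * B) / r ^ 3) * Real.sin θ) r :=
    (aux_v1 A B (Real.cos θ) r hr.ne').prodMk (aux_v2 A B (Real.sin θ) r hr.ne')
  set γt : ℝ → ℝ × ℝ := fun θ' =>
    ((A * r + B / r) * Real.cos θ', (A * r - B / r) * Real.sin θ') with hγt
  set vt : ℝ → ℝ × ℝ := fun θ' =>
    (-((A * r + B / r) * Real.sin θ'), (A * r - B / r) * Real.cos θ') with hvt
  have hγtd : ∀ θ' : ℝ, HasDerivAt γt (vt θ') θ' := fun θ' =>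
    (aux_cos (A * r + B / r) θ').prodMk (aux_sin (A * r - B / r) θ')
  have hvtd : HasDerivAt vt
      (-((A * r + B / r) * Real.cos θ), -((A * r - B / r) * Real.sin θ)) θ := by
    exact ((aux_sin (A * r + B / r) θ).neg).prodMk (aux_cos (A * r - B / r) θ)
  -- inner r-derivative
  have hinner_r : ∀ r' : ℝ, r' ≠ 0 →
      deriv (fun r'' => u ((A * r'' + B / r'') * Real.cos θ,
        (A * r'' - B / r'') * Real.sin θ)) r' = fderiv ℝ u (γr r') (vr r') :=
    fun r' h => (key1 γr r' (vr r') (hγrd r' h)).deriv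
  -- second r-derivative
  have hdrr : deriv (fun r' => deriv (fun r'' => u ((A * r'' + B / r'') * Real.cos θ,
        (A * r'' - B / r'') * Real.sin θ)) r') r
      = fderiv ℝ (fderiv ℝ u) P (vr r) (vr r)
        + fderiv ℝ u P ((2 * B / r ^ 3) * Real.cos θ, (-(2 * B) / r ^ 3) * Real.sin θ) := by
    have hev : (fun r' => deriv (fun r'' => u ((A * r'' + B / r'') * Real.cos θ,
        (A * r'' - B / r'') * Real.sin θ)) r') =ᶠ[nhds r]
        (fun r' => fderiv ℝ u (γr r') (vr r')) := by
      filter_upwards [eventually_ne_nhds hr.ne'] with r' h using hinner_r r' h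
    rw [hev.deriv_eq]
    have := key2 γr vr r (vr r)
      ((2 * B / r ^ 3) * Real.cos θ, (-(2 * B) / r ^ 3) * Real.sin θ)
      (hγrd r hr.ne') hvrd
    simpa using this.deriv
  -- inner θ-derivative
  have hinner_t : ∀ θ' : ℝ,
      deriv (fun θ'' => u ((A * r + B / r) * Real.cos θ'',
        (A * r - B / r) * Real.sin θ'')) θ' = fderiv ℝ u (γt θ') (vt θ') :=
    fun θ' => (key1 γt θ' (vt θ') (hγtd θ')).deriv
  have hdtt : deriv (fun θ' => deriv (fun θ'' => u ((A * r + B / r) * Real.cos θ'',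
        (A * r - B / r) * Real.sin θ'')) θ') θ
      = fderiv ℝ (fderiv ℝ u) P (vt θ) (vt θ)
        + fderiv ℝ u P (-((A * r + B / r) * Real.cos θ), -((A * r - B / r) * Real.sin θ)) := by
    have heq : (fun θ' => deriv (fun θ'' => u ((A * r + B / r) * Real.cos θ'',
        (A * r - B / r) * Real.sin θ'')) θ') = fun θ' => fderiv ℝ u (γt θ') (vt θ') :=
      funext hinner_t
    rw [heq]
    have := key2 γt vt θ (vt θ)
      (-((A * r + B / r) * Real.cos θ), -((A * r - B / r) * Real.sin θ))
      (hγtd θ) hvtd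
    simpa using this.deriv
  -- RHS second derivatives
  have hx0 : γr r = P := rfl
  have hRx : deriv (fun w => deriv (fun w' =>
        u (w', (A * r - B / r) * Real.sin θ)) w) ((A * r + B / r) * Real.cos θ)
      = fderiv ℝ (fderiv ℝ u) P (1, 0) (1, 0) := by
    have heq : (fun w => deriv (fun w' => u (w', (A * r - B / r) * Real.sin θ)) w)
        = fun w => fderiv ℝ u (w, (A * r - B / r) * Real.sin θ) ((1 : ℝ), (0 : ℝ)) := by
      funext w
      exact (key1 (fun w' => (w', (A * r - B / r) * Real.sin θ)) w (1, 0)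
        ((hasDerivAt_id w).prodMk (hasDerivAt_const w _))).deriv
    rw [heq]
    have := key2 (fun w => (w, (A * r - B / r) * Real.sin θ))
      (fun _ => ((1 : ℝ), (0 : ℝ))) ((A * r + B / r) * Real.cos θ) (1, 0) 0
      ((hasDerivAt_id _).prodMk (hasDerivAt_const _ _)) (hasDerivAt_const _ _)
    simpa using this.deriv
  have hRy : deriv (fun z => deriv (fun z' =>
        u ((A * r + B / r) * Real.cos θ, z')) z) ((A * r - B / r) * Real.sin θ)
      = fderiv ℝ (fderiv ℝ u) P (0, 1) (0, 1) := by
    have heq : (fun z => deriv (fun z' => u ((A * r + B / r) * Real.cos θ, z')) z)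
        = fun z => fderiv ℝ u ((A * r + B / r) * Real.cos θ, z) ((0 : ℝ), (1 : ℝ)) := by
      funext z
      exact (key1 (fun z' => ((A * r + B / r) * Real.cos θ, z')) z (0, 1)
        ((hasDerivAt_const z _).prodMk (hasDerivAt_id z))).deriv
    rw [heq]
    have := key2 (fun z => ((A * r + B / r) * Real.cos θ, z))
      (fun _ => ((0 : ℝ), (1 : ℝ))) ((A * r - B / r) * Real.sin θ) (0, 1) 0
      ((hasDerivAt_const _ _).prodMk (hasDerivAt_id _)) (hasDerivAt_const _ _)
    simpa using this.deriv
  rw [hdrr, hdtt, hRx, hRy, hinner_r r hr.ne', hx0]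
  -- now a bilinear-algebra identity
  set T := fderiv ℝ (fderiv ℝ u) P with hT
  set L := fderiv ℝ u P with hL
  have hdec : ∀ x y : ℝ, (x, y) = x • ((1:ℝ), (0:ℝ)) + y • ((0:ℝ), (1:ℝ)) := by
    intro x y; simp [Prod.ext_iff]
  have happ : ∀ (g : ℝ × ℝ →L[ℝ] ℝ) (x y : ℝ),
      g (x, y) = x * g (1, 0) + y * g (0, 1) := by
    intro g x y
    rw [hdec x y, map_add, map_smul, map_smul, smul_eq_mul, smul_eq_mul]
  have happ2 : ∀ x y : ℝ, T (x, y) = x • T (1, 0) + y • T (0, 1) := by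
    intro x y
    rw [hdec x y, map_add, map_smul, map_smul]
  have hbil : ∀ x y x' y' : ℝ, T (x, y) (x', y')
      = x * x' * T (1,0) (1,0) + x * y' * T (1,0) (0,1)
        + y * x' * T (0,1) (1,0) + y * y' * T (0,1) (0,1) := by
    intro x y x' y'
    rw [happ2 x y, ContinuousLinearMap.add_apply, ContinuousLinearMap.smul_apply,
      ContinuousLinearMap.smul_apply, happ (T (1, 0)) x' y', happ (T (0, 1)) x' y',
      smul_eq_mul, smul_eq_mul]
    ring
  have hvrr : vr r = ((A - B / r ^ 2) * Real.cos θ, (A + B / r ^ 2) * Real.sin θ) := rfl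
  have hvtt : vt θ = (-((A * r + B / r) * Real.sin θ), (A * r - B / r) * Real.cos θ) := rfl
  rw [hvrr, hvtt]
  rw [hbil ((A - B / r ^ 2) * Real.cos θ) ((A + B / r ^ 2) * Real.sin θ)
      ((A - B / r ^ 2) * Real.cos θ) ((A + B / r ^ 2) * Real.sin θ)]
  rw [hbil (-((A * r + B / r) * Real.sin θ)) ((A * r - B / r) * Real.cos θ)
      (-((A * r + B / r) * Real.sin θ)) ((A * r - B / r) * Real.cos θ)]
  rw [happ L (2 * B / r ^ 3 * Real.cos θ) (-(2 * B) / r ^ 3 * Real.sin θ)]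
  rw [happ L ((A - B / r ^ 2) * Real.cos θ) ((A + B / r ^ 2) * Real.sin θ)]
  rw [happ L (-((A * r + B / r) * Real.cos θ)) (-((A * r - B / r) * Real.sin θ))]
  -- scalar identities
  have hr0 : r ≠ 0 := hr.ne'
  have hsc : Real.sin θ ^ 2 + Real.cos θ ^ 2 = 1 := Real.sin_sq_add_cos_sq θ
  have h4 : (A + B / r ^ 2) ^ 2 - (A - B / r ^ 2) ^ 2 = (a ^ 2 - b ^ 2) / r ^ 2 := by
    rw [hA, hB]; field_simp; ring
  have e1a : ((A - B / r ^ 2) * Real.cos θ) ^ 2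
      + (1 / r ^ 2) * (-((A * r + B / r) * Real.sin θ)) ^ 2
      = (A - B / r ^ 2) ^ 2 * Real.cos θ ^ 2 + (A + B / r ^ 2) ^ 2 * Real.sin θ ^ 2 := by
    field_simp
  have e1 : ((A - B / r ^ 2) * Real.cos θ) ^ 2
      + (1 / r ^ 2) * (-((A * r + B / r) * Real.sin θ)) ^ 2
      = (A - B / r ^ 2) ^ 2 + (a ^ 2 - b ^ 2) * Real.sin θ ^ 2 / r ^ 2 := by
    rw [e1a]
    linear_combination ((A - B / r ^ 2) ^ 2) * hsc + Real.sin θ ^ 2 * h4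
  have e2a : ((A + B / r ^ 2) * Real.sin θ) ^ 2
      + (1 / r ^ 2) * ((A * r - B / r) * Real.cos θ) ^ 2
      = (A + B / r ^ 2) ^ 2 * Real.sin θ ^ 2 + (A - B / r ^ 2) ^ 2 * Real.cos θ ^ 2 := by
    field_simp
  have e2 : ((A + B / r ^ 2) * Real.sin θ) ^ 2
      + (1 / r ^ 2) * ((A * r - B / r) * Real.cos θ) ^ 2
      = (A - B / r ^ 2) ^ 2 + (a ^ 2 - b ^ 2) * Real.sin θ ^ 2 / r ^ 2 := by
    rw [e2a]
    linear_combination ((A - B / r ^ 2) ^ 2) * hsc + Real.sin θ ^ 2 * h4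
  have e3 : ((A - B / r ^ 2) * Real.cos θ) * ((A + B / r ^ 2) * Real.sin θ)
      + (1 / r ^ 2) * ((-((A * r + B / r) * Real.sin θ)) * ((A * r - B / r) * Real.cos θ))
      = 0 := by
    field_simp; ring
  have e4 : 2 * B / r ^ 3 * Real.cos θ + (1 / r) * ((A - B / r ^ 2) * Real.cos θ)
      + (1 / r ^ 2) * (-((A * r + B / r) * Real.cos θ)) = 0 := by
    field_simp; ring
  have e5 : -(2 * B) / r ^ 3 * Real.sin θ + (1 / r) * ((A + B / r ^ 2) * Real.sin θ)
      + (1 / r ^ 2) * (-((A * r - B / r) * Real.sin θ)) = 0 := by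
    field_simp; ring
  linear_combination (T (1, 0) (1, 0)) * e1 + (T (0, 1) (0, 1)) * e2
    + (T (1, 0) (0, 1) + T (0, 1) (1, 0)) * e3 + (L (1, 0)) * e4 + (L (0, 1)) * e5
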